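/- arXiv:2112.12351 — 2 statements merged into one kernel-verified Lean document; each statement's English description precedes it below -/
import Mathlib

section
/- The function v ↦ v(1-v)/φ(Φ^{-1}(v)) is bounded on (0,1); equivalently, there exists a constant M > 0 such that 1/φ(Φ^{-1}(v)) ≤ M/(v(1-v)) for all v ∈ (0,1). -/
open MeasureTheory Set

/-- The standard normal density. -/
noncomputable def stdPhi (x : ℝ) : ℝ := Real.exp (-x^2/2) / Real.sqrt (2*Real.pi)

/-- The standard normal cumulative distribution function. -/
noncomputable def stdCDF (x : ℝ) : ℝ := ∫ t in Set.Iic x, stdPhi t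

lemma stdPhi_eq (x : ℝ) : stdPhi x = Real.exp (-(1/2) * x ^ 2) / Real.sqrt (2 * Real.pi) := by
  rw [stdPhi]; ring_nf

lemma sqrt_two_pi_pos : 0 < Real.sqrt (2 * Real.pi) :=
  Real.sqrt_pos.2 (by positivity)

lemma stdPhi_pos (x : ℝ) : 0 < stdPhi x := by
  rw [stdPhi]; positivity

lemma integrable_stdPhi : Integrable stdPhi := by
  have := (integrable_exp_neg_mul_sq (b := 1/2) (by norm_num)).div_const (Real.sqrt (2 * Real.pi))
  exact this.congr (by filter_upwards with x; rw [stdPhi_eq])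

lemma integrable_mul_stdPhi : Integrable (fun t => t * stdPhi t) := by
  have := (integrable_mul_exp_neg_mul_sq (b := 1/2) (by norm_num)).div_const
    (Real.sqrt (2 * Real.pi))
  exact this.congr (by filter_upwards with x; rw [stdPhi_eq]; ring)

lemma hasDerivAt_stdPhi (x : ℝ) : HasDerivAt stdPhi (-x * stdPhi x) x := by
  have h : HasDerivAt (fun t : ℝ => -t ^ 2 / 2) (-x) x := by
    have := ((hasDerivAt_pow 2 x).neg).div_const 2
    simpa using this.congr_deriv (by push_cast; ring)
  have := (h.exp).div_const (Real.sqrt (2 * Real.pi))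
  refine this.congr_deriv ?_
  rw [stdPhi]; ring

lemma tendsto_stdPhi_atTop : Filter.Tendsto stdPhi Filter.atTop (nhds 0) := by
  have h : Filter.Tendsto (fun x : ℝ => -x ^ 2 / 2) Filter.atTop Filter.atBot := by
    apply Filter.Tendsto.atBot_div_const (by norm_num : (0:ℝ) < 2)
    exact Filter.tendsto_neg_atBot_iff.2 (Filter.tendsto_pow_atTop two_ne_zero)
  have h3 := (Real.tendsto_exp_atBot.comp h).div_const (Real.sqrt (2 * Real.pi))
  rw [zero_div] at h3
  exact h3

lemma tendsto_stdPhi_atBot : Filter.Tendsto stdPhi Filter.atBot (nhds 0) := by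
  have hsq : Filter.Tendsto (fun x : ℝ => x ^ 2) Filter.atBot Filter.atTop := by
    have := (Filter.tendsto_pow_atTop (α := ℝ) two_ne_zero).comp
      Filter.tendsto_neg_atBot_atTop
    exact this.congr fun x => by simp [Function.comp]
  have h : Filter.Tendsto (fun x : ℝ => -x ^ 2 / 2) Filter.atBot Filter.atBot := by
    apply Filter.Tendsto.atBot_div_const (by norm_num : (0:ℝ) < 2)
    exact Filter.tendsto_neg_atBot_iff.2 hsq
  have h3 := (Real.tendsto_exp_atBot.comp h).div_const (Real.sqrt (2 * Real.pi))
  rw [zero_div] at h3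
  exact h3

lemma integral_neg_mul_stdPhi_Iic (a : ℝ) :
    ∫ t in Set.Iic a, (-t) * stdPhi t = stdPhi a := by
  have h := integral_Iic_of_hasDerivAt_of_tendsto' (f := stdPhi)
    (f' := fun t => -t * stdPhi t) (a := a)
    (fun x _ => hasDerivAt_stdPhi x)
    ((integrable_mul_stdPhi.neg.congr (by filter_upwards with x; simp)).integrableOn)
    tendsto_stdPhi_atBot
  simpa using h

lemma integral_mul_stdPhi_Ioi (a : ℝ) :
    ∫ t in Set.Ioi a, t * stdPhi t = stdPhi a := by
  have h := integral_Ioi_of_hasDerivAt_of_tendsto' (f := fun t => -stdPhi t)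
    (f' := fun t => t * stdPhi t) (a := a)
    (fun x _ => by exact (hasDerivAt_stdPhi x).neg.congr_deriv (by ring))
    integrable_mul_stdPhi.integrableOn
    (by simpa using tendsto_stdPhi_atTop.neg)
  simpa using h

lemma integral_stdPhi : ∫ t, stdPhi t = 1 := by
  have h : ∫ t : ℝ, Real.exp (-(1/2) * t ^ 2) = Real.sqrt (Real.pi / (1/2)) :=
    integral_gaussian (1/2)
  have : ∫ t, stdPhi t = (∫ t : ℝ, Real.exp (-(1/2) * t ^ 2)) / Real.sqrt (2 * Real.pi) := by
    rw [← integral_div]; exact integral_congr_ae (by filter_upwards with x; rw [stdPhi_eq])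
  rw [this, h]
  rw [div_eq_one_iff_eq sqrt_two_pi_pos.ne']
  congr 1; ring

lemma one_sub_stdCDF (x : ℝ) : 1 - stdCDF x = ∫ t in Set.Ioi x, stdPhi t := by
  have := intervalIntegral.integral_Iic_add_Ioi (b := x) (f := stdPhi) (μ := volume)
    integrable_stdPhi.integrableOn integrable_stdPhi.integrableOn
  rw [integral_stdPhi] at this
  rw [stdCDF]; linarith

lemma upper_tail {x : ℝ} (hx : 1 ≤ x) : 1 - stdCDF x ≤ stdPhi x := by
  rw [one_sub_stdCDF, ← integral_mul_stdPhi_Ioi x]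
  apply setIntegral_mono_on integrable_stdPhi.integrableOn
    integrable_mul_stdPhi.integrableOn measurableSet_Ioi
  intro t ht
  have h1 : 1 ≤ t := hx.trans ht.le
  nlinarith [stdPhi_pos t]

lemma lower_tail {x : ℝ} (hx : x ≤ -1) : stdCDF x ≤ stdPhi x := by
  rw [stdCDF, ← integral_neg_mul_stdPhi_Iic x]
  apply setIntegral_mono_on integrable_stdPhi.integrableOn
    ((integrable_mul_stdPhi.neg.congr (by filter_upwards with x; simp)).integrableOn)
    measurableSet_Iic
  intro t ht
  have h1 : t ≤ -1 := le_trans ht hx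
  nlinarith [stdPhi_pos t]

lemma stdPhi_one_le {x : ℝ} (h1 : -1 ≤ x) (h2 : x ≤ 1) : stdPhi 1 ≤ stdPhi x := by
  rw [stdPhi, stdPhi, div_le_div_iff_of_pos_right sqrt_two_pi_pos]
  exact Real.exp_le_exp.2 (by nlinarith)

/-- There exists `M > 0` with `1/φ(Φ⁻¹ v) ≤ M/(v(1-v))` for all `v ∈ (0,1)`;
equivalently `v ↦ v(1-v)/φ(Φ⁻¹ v)` is bounded on `(0,1)`. -/
theorem stmt0 (Φinv : ℝ → ℝ)
    (hinv : ∀ v ∈ Set.Ioo (0:ℝ) 1, stdCDF (Φinv v) = v)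
    (hinv' : ∀ x : ℝ, Φinv (stdCDF x) = x) :
    ∃ M > (0:ℝ), ∀ v ∈ Set.Ioo (0:ℝ) 1,
      1 / stdPhi (Φinv v) ≤ M / (v * (1 - v)) := by
  have hφ1 := stdPhi_pos 1
  refine ⟨1 + 1 / (4 * stdPhi 1), by positivity, ?_⟩
  intro v hv
  obtain ⟨hv0, hv1⟩ := hv
  set x := Φinv v with hx
  have hcdf : stdCDF x = v := hinv v ⟨hv0, hv1⟩
  have hφ := stdPhi_pos x
  have hc : (0:ℝ) < 1 / (4 * stdPhi 1) := by positivity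
  have hvv : 0 < v * (1 - v) := by nlinarith
  rw [div_le_div_iff₀ hφ hvv]
  have key : v * (1 - v) ≤ (1 + 1 / (4 * stdPhi 1)) * stdPhi x := by
    rcases le_or_gt 1 x with h | h
    · have h2 := upper_tail h
      rw [hcdf] at h2
      nlinarith [mul_pos hc hφ]
    rcases le_or_gt x (-1) with h' | h'
    · have h2 := lower_tail h'
      rw [hcdf] at h2
      nlinarith [mul_pos hc hφ]
    · have h2 := stdPhi_one_le h'.le h.le
      have h3 : (1 / (4 * stdPhi 1)) * stdPhi 1 = 1/4 := by field_simp
      nlinarith [mul_le_mul_of_nonneg_left h2 hc.le, sq_nonneg (2*v - 1)]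
  linarith
end

section
/- For ω ∈ (0,1), the integral ∫_{(0,1)²} g_ω(u₁,u₂)/(u₁(1-u₁)u₂(1-u₂)) du₁ du₂ is finite, where g_ω(u₁,u₂) = min(u₁,u₂,1-u₁,1-u₂)^ω. -/
open MeasureTheory Set Real

lemma betaReal_integrable {a : ℝ} (ha : 0 < a) :
    IntegrableOn (fun x : ℝ => x ^ (a - 1) * (1 - x) ^ (a - 1)) (Set.Ioo (0:ℝ) 1) volume := by
  have h := (Complex.betaIntegral_convergent (u := (a:ℂ)) (v := (a:ℂ))
      (by simpa using ha) (by simpa using ha)).norm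
  have h2 : IntegrableOn
      (fun x : ℝ => ‖(x : ℂ) ^ ((a:ℂ) - 1) * (1 - (x : ℂ)) ^ ((a:ℂ) - 1)‖)
      (Set.Ioc (0:ℝ) 1) volume := by
    rwa [intervalIntegrable_iff_integrableOn_Ioc_of_le zero_le_one] at h
  refine ((h2.mono_set Ioo_subset_Ioc_self).congr_fun ?_ measurableSet_Ioo)
  intro x hx
  have hx0 : (0:ℝ) < x := hx.1
  have hx1 : (0:ℝ) < 1 - x := by linarith [hx.2]
  have e1 : ‖(x : ℂ) ^ ((a:ℂ) - 1)‖ = x ^ (a - 1) := by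
    rw [Complex.norm_cpow_eq_rpow_re_of_pos hx0]; norm_num
  have e2 : ‖(1 - (x : ℂ)) ^ ((a:ℂ) - 1)‖ = (1 - x) ^ (a - 1) := by
    have : (1 - (x:ℂ)) = ((1 - x : ℝ) : ℂ) := by push_cast; ring
    rw [this, Complex.norm_cpow_eq_rpow_re_of_pos hx1]; norm_num
  simp only [norm_mul, e1, e2]

/-- For `ω ∈ (0,1)`, the integral
`∫_{(0,1)²} min(u₁,u₂,1-u₁,1-u₂)^ω / (u₁(1-u₁)u₂(1-u₂)) du₁ du₂` is finite. -/
theorem stmt11 (ω : ℝ) (hω : ω ∈ Set.Ioo (0:ℝ) 1) :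
    IntegrableOn
      (fun p : ℝ × ℝ =>
        (min (min p.1 p.2) (min (1 - p.1) (1 - p.2))) ^ ω
          / (p.1 * (1 - p.1) * p.2 * (1 - p.2)))
      (Set.Ioo (0:ℝ) 1 ×ˢ Set.Ioo (0:ℝ) 1) volume := by
  obtain ⟨hω0, hω1⟩ := hω
  set a : ℝ := ω / 4 with ha_def
  have ha : 0 < a := by positivity
  set G : ℝ → ℝ := fun x => x ^ (a - 1) * (1 - x) ^ (a - 1) with hG
  have hGint : IntegrableOn G (Set.Ioo (0:ℝ) 1) volume := betaReal_integrable ha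
  -- product integrability
  have hprod : IntegrableOn (fun p : ℝ × ℝ => G p.1 * G p.2)
      (Set.Ioo (0:ℝ) 1 ×ˢ Set.Ioo (0:ℝ) 1) volume := by
    rw [IntegrableOn, Measure.volume_eq_prod, ← Measure.prod_restrict]
    exact hGint.mul_prod hGint
  -- measurability of f
  have hmeas : AEStronglyMeasurable
      (fun p : ℝ × ℝ =>
        (min (min p.1 p.2) (min (1 - p.1) (1 - p.2))) ^ ω
          / (p.1 * (1 - p.1) * p.2 * (1 - p.2)))
      (volume.restrict (Set.Ioo (0:ℝ) 1 ×ˢ Set.Ioo (0:ℝ) 1)) := by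
    apply Measurable.aestronglyMeasurable
    fun_prop
  refine hprod.mono' hmeas ?_
  rw [ae_restrict_iff' (measurableSet_Ioo.prod measurableSet_Ioo)]
  filter_upwards with p hp
  obtain ⟨⟨h10, h11⟩, h20, h21⟩ := hp
  set m : ℝ := min (min p.1 p.2) (min (1 - p.1) (1 - p.2)) with hm
  have h1' : (0:ℝ) < 1 - p.1 := by linarith
  have h2' : (0:ℝ) < 1 - p.2 := by linarith
  have hm0 : 0 < m := by
    simp only [hm, lt_min_iff]
    exact ⟨⟨h10, h20⟩, h1', h2'⟩
  have hD : 0 < p.1 * (1 - p.1) * p.2 * (1 - p.2) := by positivity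
  have hfnn : 0 ≤ m ^ ω / (p.1 * (1 - p.1) * p.2 * (1 - p.2)) := by positivity
  rw [Real.norm_of_nonneg hfnn]
  -- key bound on the numerator
  have key : m ^ ω ≤ p.1 ^ a * (1 - p.1) ^ a * (p.2 ^ a * (1 - p.2) ^ a) := by
    have hsplit : m ^ ω = m ^ a * m ^ a * (m ^ a * m ^ a) := by
      have hω' : ω = a + a + (a + a) := by rw [ha_def]; ring
      rw [hω', Real.rpow_add hm0, Real.rpow_add hm0]
    rw [hsplit]
    have b1 : m ^ a ≤ p.1 ^ a :=
      Real.rpow_le_rpow hm0.le ((min_le_left _ _).trans (min_le_left _ _)) ha.le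
    have b2 : m ^ a ≤ p.2 ^ a :=
      Real.rpow_le_rpow hm0.le ((min_le_left _ _).trans (min_le_right _ _)) ha.le
    have b3 : m ^ a ≤ (1 - p.1) ^ a :=
      Real.rpow_le_rpow hm0.le ((min_le_right _ _).trans (min_le_left _ _)) ha.le
    have b4 : m ^ a ≤ (1 - p.2) ^ a :=
      Real.rpow_le_rpow hm0.le ((min_le_right _ _).trans (min_le_right _ _)) ha.le
    have hma : 0 ≤ m ^ a := (Real.rpow_pos_of_pos hm0 a).le
    gcongr
  calc m ^ ω / (p.1 * (1 - p.1) * p.2 * (1 - p.2))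
      ≤ (p.1 ^ a * (1 - p.1) ^ a * (p.2 ^ a * (1 - p.2) ^ a)) /
        (p.1 * (1 - p.1) * p.2 * (1 - p.2)) := by gcongr
    _ = G p.1 * G p.2 := by
        simp only [hG]
        rw [Real.rpow_sub h10, Real.rpow_sub h1', Real.rpow_sub h20, Real.rpow_sub h2',
          Real.rpow_one, Real.rpow_one, Real.rpow_one, Real.rpow_one]
        field_simp
end
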